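/- Define a sequence by T(0) = 1 and T(n) = ((2^{n+1} − 1)/(2^n − 1))·T(n-1)² for n ≥ 1 (working in ℚ). Then T(n) = (2^{n+1} − 1)·∏_{i=2}^{n} (2^i − 1)^{2^{n−i}} for all n ≥ 1; in particular T(n) is a positive integer. -/

import Mathlib

open Finset

lemma farey_aux_ne (n : ℕ) (h : 1 ≤ n) : (2:ℚ)^n - 1 ≠ 0 := by
  have h1 : (2:ℚ) ≤ 2^n := by
    calc (2:ℚ) = 2^1 := (pow_one 2).symm
    _ ≤ 2^n := pow_le_pow_right₀ (by norm_num) h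
  intro hc; linarith

/-- Let `T : ℕ → ℚ` with `T 0 = 1` and `T n = ((2^(n+1)-1)/(2^n-1))·T(n-1)²` for `n ≥ 1`.
Then `T n = (2^(n+1)-1)·∏_{i=2}^{n} (2^i-1)^(2^(n-i))` for all `n ≥ 1`; in particular
`T n` is a positive integer. -/
theorem farey_spanning_trees (T : ℕ → ℚ) (h0 : T 0 = 1)
    (hrec : ∀ n, 1 ≤ n →
      T n = ((2 ^ (n + 1) - 1) / (2 ^ n - 1)) * (T (n - 1)) ^ 2) :
    ∀ n, 1 ≤ n →
      T n = (2 ^ (n + 1) - 1) * ∏ i ∈ Icc 2 n, ((2 : ℚ) ^ i - 1) ^ (2 ^ (n - i)) ∧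
      ∃ m : ℕ, 0 < m ∧ T n = m := by
  have key : ∀ n, 1 ≤ n →
      T n = (2 ^ (n + 1) - 1) * ∏ i ∈ Icc 2 n, ((2 : ℚ) ^ i - 1) ^ (2 ^ (n - i)) := by
    intro n hn
    induction n with
    | zero => omega
    | succ n ih =>
      rcases Nat.lt_or_ge n 1 with h1 | h1
      · have hn0 : n = 0 := by omega
        subst hn0
        rw [hrec 1 le_rfl]
        simp [h0]
        norm_num
      · rw [hrec (n+1) (by omega)]
        simp only [Nat.add_sub_cancel]
        rw [ih h1, Finset.prod_Icc_succ_top (by omega : 2 ≤ n+1)]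
        have hB := farey_aux_ne (n+1) (by omega)
        have hprod : (∏ i ∈ Icc 2 n, ((2:ℚ)^i - 1) ^ (2 ^ (n - i)))^2
            = ∏ i ∈ Icc 2 n, ((2:ℚ)^i - 1) ^ (2 ^ (n + 1 - i)) := by
          rw [← Finset.prod_pow]
          refine Finset.prod_congr rfl fun i hi => ?_
          rw [← pow_mul]
          congr 1
          have hi' : i ≤ n := (Finset.mem_Icc.mp hi).2
          rw [← pow_succ]
          congr 1
          omega
        rw [mul_pow, hprod]
        simp only [Nat.sub_self, pow_zero, pow_one]
        field_simp
  intro n hn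
  refine ⟨key n hn, (2^(n+1)-1) * ∏ i ∈ Icc 2 n, (2^i-1)^(2^(n-i)), ?_, ?_⟩
  · apply Nat.mul_pos
    · have : 2 ≤ 2^(n+1) := Nat.one_lt_two_pow_iff.mpr (by omega)
      omega
    · apply Finset.prod_pos
      intro i hi
      have hi2 : 2 ≤ i := (Finset.mem_Icc.mp hi).1
      have : 2 ≤ 2^i := Nat.one_lt_two_pow_iff.mpr (by omega)
      exact pow_pos (by omega) _
  · have hcast : ∀ k:ℕ, ((2^k - 1 : ℕ) : ℚ) = 2^k - 1 := fun k => by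
      rw [Nat.cast_sub Nat.one_le_two_pow]; push_cast; ring
    rw [key n hn]
    push_cast [hcast]
    ring
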